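/- Let Ω, Ω* be compact metric spaces with Ω nonempty, and let c : Ω × Ω* → ℝ be continuous. Let μ₁, μ₂ be Borel probability measures on Ω with μ₁ ≠ μ₂, let ν be a Borel probability measure on Ω*, and for i = 1, 2 let φᵢ ∈ C(Ω, ℝ) be a global minimizer over C(Ω, ℝ) of φ ↦ ∫_{Ω*} φ^c dν − ∫_Ω φ dμᵢ, where φ^c(y) = sup_{x ∈ Ω} (φ(x) − c(x, y)). Suppose at least one of the potentials is unique up to an additive constant (every minimizer for μ₁ has the form φ₁ + C, or every minimizer for μ₂ has the form φ₂ + C). Then sup_{x ∈ Ω} (φ₁(x) − φ₂(x)) = sup_{x ∈ supp((μ₁ − μ₂)⁺)} (φ₁(x) − φ₂(x)), where (μ₁ − μ₂)⁺ is the positive part of the signed measure μ₁ − μ₂ (equivalently, the truncated measure subtraction μ₁ − μ₂ of the two probability measures) and supp denotes the topological support, the set of points all of whose open neighborhoods have positive measure. -/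

import Mathlib

open MeasureTheory

private lemma mp_bdd_shift {ι : Type*} {g : ι → ℝ} (h : BddAbove (Set.range g)) (s : ℝ) :
    BddAbove (Set.range fun x => g x - s) := by
  obtain ⟨b, hb⟩ := h
  refine ⟨b - s, ?_⟩
  rintro _ ⟨x, rfl⟩
  exact sub_le_sub_right (hb ⟨x, rfl⟩) s

private lemma mp_csup_max {ι : Type*} [Nonempty ι] (g₁ g₂ : ι → ℝ)
    (h₁ : BddAbove (Set.range g₁)) (h₂ : BddAbove (Set.range g₂)) :
    (⨆ x, max (g₁ x) (g₂ x)) = max (⨆ x, g₁ x) (⨆ x, g₂ x) := by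
  have hb : BddAbove (Set.range fun x => max (g₁ x) (g₂ x)) := by
    obtain ⟨b₁, hb₁⟩ := h₁
    obtain ⟨b₂, hb₂⟩ := h₂
    refine ⟨max b₁ b₂, ?_⟩
    rintro _ ⟨x, rfl⟩
    exact max_le_max (hb₁ ⟨x, rfl⟩) (hb₂ ⟨x, rfl⟩)
  apply le_antisymm
  · exact ciSup_le fun x => max_le_max (le_ciSup h₁ x) (le_ciSup h₂ x)
  · exact max_le (ciSup_mono hb fun x => le_max_left _ _)
      (ciSup_mono hb fun x => le_max_right _ _)

private lemma mp_csup_sub {ι : Type*} [Nonempty ι] (g : ι → ℝ)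
    (h : BddAbove (Set.range g)) (s : ℝ) :
    (⨆ x, (g x - s)) = (⨆ x, g x) - s := by
  apply le_antisymm
  · exact ciSup_le fun x => sub_le_sub_right (le_ciSup h x) s
  · rw [sub_le_iff_le_add]
    refine ciSup_le fun x => ?_
    have : g x - s ≤ ⨆ x, (g x - s) := le_ciSup (mp_bdd_shift h s) x
    linarith

private lemma mp_integrable {X : Type*} [MetricSpace X] [CompactSpace X]
    [MeasurableSpace X] [BorelSpace X] (μ : Measure X) [IsFiniteMeasure μ]
    {f : X → ℝ} (hf : Continuous f) : Integrable f μ :=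
  integrableOn_univ.mp (hf.continuousOn.integrableOn_compact isCompact_univ)

/-- Maximum principle for Kantorovich potentials: the supremum
of `φ₁ − φ₂` over `Ω` is attained on the support of `(μ₁ − μ₂)⁺`, the
truncated measure subtraction. -/
theorem maximum_principle_kantorovich_potentials
    {Ω Ωs : Type*} [MetricSpace Ω] [CompactSpace Ω] [Nonempty Ω]
    [MeasurableSpace Ω] [BorelSpace Ω]
    [MetricSpace Ωs] [CompactSpace Ωs] [MeasurableSpace Ωs] [BorelSpace Ωs]
    (c : Ω × Ωs → ℝ) (hc : Continuous c)
    (μ₁ μ₂ : Measure Ω) [IsProbabilityMeasure μ₁] [IsProbabilityMeasure μ₂]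
    (hne : μ₁ ≠ μ₂)
    (ν : Measure Ωs) [IsProbabilityMeasure ν]
    (J : Measure Ω → C(Ω, ℝ) → ℝ)
    (hJ : ∀ (μ : Measure Ω) (φ : C(Ω, ℝ)),
      J μ φ = ∫ y, (⨆ x : Ω, (φ x - c (x, y))) ∂ν - ∫ x, φ x ∂μ)
    (φ₁ φ₂ : C(Ω, ℝ))
    (h₁ : ∀ ψ : C(Ω, ℝ), J μ₁ φ₁ ≤ J μ₁ ψ)
    (h₂ : ∀ ψ : C(Ω, ℝ), J μ₂ φ₂ ≤ J μ₂ ψ)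
    (huniq :
      (∀ ψ : C(Ω, ℝ), (∀ χ : C(Ω, ℝ), J μ₁ ψ ≤ J μ₁ χ) →
        ∃ C : ℝ, ψ = φ₁ + ContinuousMap.const Ω C) ∨
      (∀ ψ : C(Ω, ℝ), (∀ χ : C(Ω, ℝ), J μ₂ ψ ≤ J μ₂ χ) →
        ∃ C : ℝ, ψ = φ₂ + ContinuousMap.const Ω C)) :
    (⨆ x : Ω, (φ₁ x - φ₂ x)) =
      ⨆ x : {x : Ω // ∀ V : Set Ω, IsOpen V → x ∈ V → 0 < (μ₁ - μ₂) V},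
        (φ₁ x.1 - φ₂ x.1) := by
  classical
  set P : Ω → Prop := fun x => ∀ V : Set Ω, IsOpen V → x ∈ V → 0 < (μ₁ - μ₂) V with hP
  -- basic measure theory facts
  have hnull : ∀ u : Set Ω, (∀ x ∈ u, ¬ P x) → (μ₁ - μ₂) u = 0 := by
    intro u hu
    apply measure_null_of_locally_null
    intro x hx
    have h := hu x hx
    simp only [hP, not_forall] at h
    obtain ⟨V, hV, hxV, hV0⟩ := h
    exact ⟨V, nhdsWithin_le_nhds (hV.mem_nhds hxV), le_zero_iff.mp (not_lt.mp hV0)⟩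
  obtain ⟨D, hD, hD1, hD2⟩ := hahn_decomposition (μ := μ₁) (ν := μ₂)
  have hres : μ₂.restrict D ≤ μ₁.restrict D := by
    rw [Measure.le_iff]
    intro t ht
    rw [Measure.restrict_apply ht, Measure.restrict_apply ht]
    exact hD1 _ (ht.inter hD) Set.inter_subset_right
  have hμeq : μ₁ - μ₂ = μ₁.restrict D - μ₂.restrict D := by
    apply le_antisymm
    · apply Measure.sub_le_of_le_add
      rw [Measure.le_iff]
      intro t ht
      have e1 : μ₁ (t ∩ D) + μ₁ (t \ D) = μ₁ t := measure_inter_add_diff t hD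
      have e2 : μ₂ (t ∩ D) + μ₂ (t \ D) = μ₂ t := measure_inter_add_diff t hD
      have e3 : (μ₁.restrict D - μ₂.restrict D) t = μ₁ (t ∩ D) - μ₂ (t ∩ D) := by
        rw [Measure.sub_apply ht hres, Measure.restrict_apply ht, Measure.restrict_apply ht]
      have e4 : μ₁ (t ∩ D) - μ₂ (t ∩ D) + μ₂ (t ∩ D) = μ₁ (t ∩ D) :=
        tsub_add_cancel_of_le (hD1 _ (ht.inter hD) Set.inter_subset_right)
      have e5 : μ₁ (t \ D) ≤ μ₂ (t \ D) := by
        refine hD2 _ (ht.diff hD) ?_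
        rw [Set.diff_eq]
        exact Set.inter_subset_right
      calc μ₁ t = μ₁ (t ∩ D) + μ₁ (t \ D) := e1.symm
        _ ≤ (μ₁ (t ∩ D) - μ₂ (t ∩ D) + μ₂ (t ∩ D)) + μ₂ (t \ D) := by
            rw [e4]; exact add_le_add_right e5 _
        _ = (μ₁ (t ∩ D) - μ₂ (t ∩ D)) + μ₂ t := by rw [add_assoc, e2]
        _ = ((μ₁.restrict D - μ₂.restrict D) + μ₂) t := by
            rw [Measure.add_apply, e3]
    · conv_rhs => rw [Measure.sub_def]
      apply le_sInf
      intro d hd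
      rw [Measure.le_iff]
      intro t ht
      rw [Measure.sub_apply ht hres, Measure.restrict_apply ht, Measure.restrict_apply ht,
        tsub_le_iff_right]
      calc μ₁ (t ∩ D) ≤ (d + μ₂) (t ∩ D) := hd _
        _ = d (t ∩ D) + μ₂ (t ∩ D) := Measure.add_apply _ _ _
        _ ≤ d t + μ₂ (t ∩ D) := add_le_add_left (measure_mono Set.inter_subset_left) _
  have K1 : ∀ t : Set Ω, MeasurableSet t → (μ₁ - μ₂) t = 0 → μ₁ t ≤ μ₂ t := by
    intro t ht h0
    rw [hμeq, Measure.sub_apply ht hres, Measure.restrict_apply ht,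
      Measure.restrict_apply ht] at h0
    have h01 : μ₁ (t ∩ D) ≤ μ₂ (t ∩ D) := tsub_eq_zero_iff_le.mp h0
    have e5 : μ₁ (t \ D) ≤ μ₂ (t \ D) := by
      refine hD2 _ (ht.diff hD) ?_
      rw [Set.diff_eq]
      exact Set.inter_subset_right
    calc μ₁ t = μ₁ (t ∩ D) + μ₁ (t \ D) := (measure_inter_add_diff t hD).symm
      _ ≤ μ₂ (t ∩ D) + μ₂ (t \ D) := add_le_add h01 e5
      _ = μ₂ t := measure_inter_add_diff t hD
  have K2 : ∀ t : Set Ω, MeasurableSet t → (∀ x ∈ t, ¬ P x) → μ₁ t ≤ μ₂ t :=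
    fun t ht hPt => K1 t ht (hnull t hPt)
  -- the support is nonempty
  have hSne : ∃ x : Ω, P x := by
    by_contra hno
    push_neg at hno
    have hle : ∀ t : Set Ω, MeasurableSet t → μ₁ t ≤ μ₂ t :=
      fun t ht => K2 t ht (fun x _ => hno x)
    apply hne
    ext t ht
    refine le_antisymm (hle t ht) ?_
    have h1 := hle tᶜ ht.compl
    rw [prob_compl_eq_one_sub ht, prob_compl_eq_one_sub ht] at h1
    have h2 : (1 : ENNReal) - (1 - μ₂ t) ≤ 1 - (1 - μ₁ t) := tsub_le_tsub_left h1 1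
    rwa [ENNReal.sub_sub_cancel ENNReal.one_ne_top prob_le_one,
      ENNReal.sub_sub_cancel ENNReal.one_ne_top prob_le_one] at h2
  obtain ⟨z₀, hz₀⟩ := hSne
  haveI : Nonempty {x : Ω // ∀ V : Set Ω, IsOpen V → x ∈ V → 0 < (μ₁ - μ₂) V} := ⟨⟨z₀, hz₀⟩⟩
  -- the function f = φ₁ - φ₂ and its maxima
  set f : Ω → ℝ := fun x => φ₁ x - φ₂ x with hf
  clear_value f
  have hfc : Continuous f := by rw [hf]; exact φ₁.continuous.sub φ₂.continuous
  obtain ⟨xM, -, hxM⟩ := isCompact_univ.exists_isMaxOn Set.univ_nonempty hfc.continuousOn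
  have hxM' : ∀ y, f y ≤ f xM := fun y => hxM (Set.mem_univ y)
  -- S is closed, compact, so f attains its max on S
  have hSclosed : IsClosed {x : Ω | P x} := by
    rw [← isOpen_compl_iff, isOpen_iff_forall_mem_open]
    intro x hx
    simp only [Set.mem_compl_iff, Set.mem_setOf_eq, hP, not_forall] at hx
    obtain ⟨V, hV, hxV, hV0⟩ := hx
    refine ⟨V, ?_, hV, hxV⟩
    intro z hz hzP
    exact hV0 (hzP V hV hz)
  obtain ⟨x₀, hx₀S, hx₀max⟩ := hSclosed.isCompact.exists_isMaxOn ⟨z₀, hz₀⟩ hfc.continuousOn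
  have hx₀max' : ∀ z : Ω, P z → f z ≤ f x₀ := fun z hz => hx₀max hz
  -- rewrite both sides as maxima
  have hbddS : BddAbove (Set.range fun x : {x : Ω // ∀ V : Set Ω, IsOpen V → x ∈ V →
      0 < (μ₁ - μ₂) V} => φ₁ x.1 - φ₂ x.1) := by
    refine ⟨f x₀, ?_⟩
    rintro _ ⟨z, rfl⟩
    simpa only [hf] using hx₀max' z.1 z.2
  have hRHS : (⨆ x : {x : Ω // ∀ V : Set Ω, IsOpen V → x ∈ V → 0 < (μ₁ - μ₂) V},
      (φ₁ x.1 - φ₂ x.1)) = f x₀ := by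
    apply le_antisymm
    · refine ciSup_le fun z => ?_
      simpa only [hf] using hx₀max' z.1 z.2
    · simpa only [hf] using le_ciSup hbddS ⟨x₀, hx₀S⟩
  have hbddΩ : BddAbove (Set.range f) := (isCompact_range hfc).bddAbove
  have hLHS : (⨆ x : Ω, (φ₁ x - φ₂ x)) = f xM := by
    apply le_antisymm
    · refine ciSup_le fun x => ?_
      simpa only [hf] using hxM' x
    · simpa only [hf] using le_ciSup hbddΩ xM
  rw [hf]
  rw [hLHS, hRHS]
  refine le_antisymm ?_ (hxM' x₀)
  by_contra hlt
  push_neg at hlt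
  -- choose s strictly between the two maxima
  set s : ℝ := (f x₀ + f xM) / 2 with hs
  clear_value s
  have hs1 : f x₀ < s := by rw [hs]; linarith
  have hs2 : s < f xM := by rw [hs]; linarith
  -- the perturbed potentials
  have hs2' : s < φ₁ xM - φ₂ xM := by rw [hf] at hs2; exact hs2
  set χ : C(Ω, ℝ) := φ₁ ⊓ (φ₂ + ContinuousMap.const Ω s) with hχ
  set ρ : C(Ω, ℝ) := φ₂ ⊔ (φ₁ - ContinuousMap.const Ω s) with hρ
  set g : C(Ω, ℝ) := ρ - φ₂ with hg
  clear_value χ ρ g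
  have hgx : ∀ x, g x = max (f x - s) 0 := by
    intro x
    simp only [hg, hρ, ContinuousMap.sub_apply, ContinuousMap.sup_apply,
      ContinuousMap.const_apply, hf]
    rcases le_total (φ₁ x - s) (φ₂ x) with h | h
    · rw [sup_eq_left.mpr h, max_eq_right (by linarith)]
      ring
    · rw [sup_eq_right.mpr h, max_eq_left (by linarith)]
      ring
  have hg0 : ∀ x, 0 ≤ g x := fun x => by rw [hgx x]; exact le_max_right _ _
  have hχx : ∀ x, χ x = φ₁ x - g x := by
    intro x
    rw [hgx x]
    simp only [hχ, ContinuousMap.inf_apply, ContinuousMap.add_apply,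
      ContinuousMap.const_apply, hf]
    rcases le_total (φ₁ x) (φ₂ x + s) with h | h
    · rw [inf_eq_left.mpr h, max_eq_right (by linarith)]
      ring
    · rw [inf_eq_right.mpr h, max_eq_left (by linarith)]
      ring
  have hρx : ∀ x, ρ x = φ₂ x + g x := by
    intro x
    simp only [hg, ContinuousMap.sub_apply]
    ring
  -- (★) : ∫ g dμ₁ ≤ ∫ g dμ₂
  have hstar : ∫ x, g x ∂μ₁ ≤ ∫ x, g x ∂μ₂ := by
    set E : Set Ω := {x | s ≤ f x} with hE
    have hEclosed : IsClosed E := isClosed_le continuous_const hfc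
    have hEm : MeasurableSet E := hEclosed.measurableSet
    have hgE0 : ∀ x, x ∉ E → g x = 0 := by
      intro x hx
      simp only [hE, Set.mem_setOf_eq, not_le] at hx
      rw [hgx x, max_eq_right (by linarith)]
    have hEP : ∀ x ∈ E, ¬ P x := by
      intro x hx hPx
      have := hx₀max' x hPx
      simp only [hE, Set.mem_setOf_eq] at hx
      linarith
    have hrestrE : μ₁.restrict E ≤ μ₂.restrict E := by
      rw [Measure.le_iff]
      intro t ht
      rw [Measure.restrict_apply ht, Measure.restrict_apply ht]
      exact K2 _ (ht.inter hEm) (fun x hx => hEP x hx.2)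
    calc ∫ x, g x ∂μ₁ = ∫ x in E, g x ∂μ₁ :=
          (setIntegral_eq_integral_of_forall_compl_eq_zero hgE0).symm
      _ ≤ ∫ x in E, g x ∂μ₂ := by
          refine integral_mono_measure hrestrE (ae_of_all _ hg0) ?_
          exact (mp_integrable μ₂ g.continuous).restrict
      _ = ∫ x, g x ∂μ₂ := setIntegral_eq_integral_of_forall_compl_eq_zero hgE0
  -- c-transform toolkit
  have hbdd : ∀ (φ : C(Ω, ℝ)) (y : Ωs), BddAbove (Set.range fun x => φ x - c (x, y)) := by
    intro φ y
    exact (isCompact_range (φ.continuous.sub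
      (hc.comp (continuous_id.prodMk continuous_const)))).bddAbove
  have hTcont : ∀ φ : C(Ω, ℝ), Continuous (fun y => ⨆ x : Ω, (φ x - c (x, y))) := by
    intro φ
    rw [Metric.continuous_iff]
    intro y ε hε
    obtain ⟨δ, hδ, hδ'⟩ := Metric.uniformContinuous_iff.mp
      (CompactSpace.uniformContinuous_of_continuous hc) (ε / 2) (by linarith)
    refine ⟨δ, hδ, fun y' hy' => ?_⟩
    have key : ∀ a b : Ωs, dist a b < δ →
        (⨆ x : Ω, (φ x - c (x, a))) ≤ (⨆ x : Ω, (φ x - c (x, b))) + ε / 2 := by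
      intro a b hab
      refine ciSup_le fun x => ?_
      have hd : dist ((x, a) : Ω × Ωs) (x, b) = dist a b := by
        rw [Prod.dist_eq]
        simp [max_eq_right dist_nonneg]
      have h1 : dist (c (x, a)) (c (x, b)) < ε / 2 := hδ' (by rw [hd]; exact hab)
      rw [Real.dist_eq] at h1
      have h2 := abs_lt.mp h1
      have h3 : φ x - c (x, b) ≤ ⨆ x : Ω, (φ x - c (x, b)) := le_ciSup (hbdd φ b) x
      linarith [h2.1, h2.2]
    have hk1 := key y' y hy'
    have hk2 := key y y' (by rwa [dist_comm])
    rw [Real.dist_eq, abs_lt]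
    constructor <;> linarith
  have hTint : ∀ φ : C(Ω, ℝ), Integrable (fun y => ⨆ x : Ω, (φ x - c (x, y))) ν :=
    fun φ => mp_integrable ν (hTcont φ)
  -- c-transform of ρ
  have hTρ : ∀ y, (⨆ x : Ω, (ρ x - c (x, y))) =
      max (⨆ x : Ω, (φ₂ x - c (x, y))) ((⨆ x : Ω, (φ₁ x - c (x, y))) - s) := by
    intro y
    have e : ∀ x : Ω, ρ x - c (x, y) =
        max (φ₂ x - c (x, y)) ((φ₁ x - c (x, y)) - s) := by
      intro x
      simp only [hρ, ContinuousMap.sup_apply, ContinuousMap.sub_apply,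
        ContinuousMap.const_apply]
      rcases le_total (φ₁ x - s) (φ₂ x) with h | h
      · rw [sup_eq_left.mpr h, max_eq_left (by linarith)]
      · rw [sup_eq_right.mpr h, max_eq_right (by linarith)]
        ring
    calc (⨆ x : Ω, (ρ x - c (x, y)))
        = ⨆ x : Ω, max (φ₂ x - c (x, y)) ((φ₁ x - c (x, y)) - s) := by
          exact congrArg _ (funext e)
      _ = max (⨆ x : Ω, (φ₂ x - c (x, y))) (⨆ x : Ω, ((φ₁ x - c (x, y)) - s)) :=
          mp_csup_max _ _ (hbdd φ₂ y) (mp_bdd_shift (hbdd φ₁ y) s)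
      _ = max (⨆ x : Ω, (φ₂ x - c (x, y))) ((⨆ x : Ω, (φ₁ x - c (x, y))) - s) := by
          rw [mp_csup_sub _ (hbdd φ₁ y) s]
  -- c-transform of χ is dominated
  have hTχ : ∀ y, (⨆ x : Ω, (χ x - c (x, y))) ≤
      (⨆ x : Ω, (φ₁ x - c (x, y))) + (⨆ x : Ω, (φ₂ x - c (x, y)))
        - (⨆ x : Ω, (ρ x - c (x, y))) := by
    intro y
    set a := ⨆ x : Ω, (φ₁ x - c (x, y)) with ha
    set b := ⨆ x : Ω, (φ₂ x - c (x, y)) with hb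
    have hχa : (⨆ x : Ω, (χ x - c (x, y))) ≤ a := by
      refine ciSup_le fun x => ?_
      have h1 : χ x ≤ φ₁ x := by
        simp only [hχ, ContinuousMap.inf_apply]
        exact inf_le_left
      have h2 : φ₁ x - c (x, y) ≤ a := le_ciSup (hbdd φ₁ y) x
      linarith
    have hχb : (⨆ x : Ω, (χ x - c (x, y))) ≤ b + s := by
      refine ciSup_le fun x => ?_
      have h1 : χ x ≤ φ₂ x + s := by
        simp only [hχ, ContinuousMap.inf_apply, ContinuousMap.add_apply,
          ContinuousMap.const_apply]
        exact inf_le_right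
      have h2 : φ₂ x - c (x, y) ≤ b := le_ciSup (hbdd φ₂ y) x
      linarith
    rw [hTρ y]
    rcases le_total (a - s) b with h | h
    · rw [max_eq_left h]
      linarith
    · rw [max_eq_right h]
      linarith
  -- integral versions
  have hIρ : ∫ y, (⨆ x : Ω, (ρ x - c (x, y))) ∂ν ≤
      (∫ y, (⨆ x : Ω, (φ₁ x - c (x, y))) ∂ν) + (∫ y, (⨆ x : Ω, (φ₂ x - c (x, y))) ∂ν)
        - ∫ y, (⨆ x : Ω, (χ x - c (x, y))) ∂ν := by
    have hint3 : Integrable (fun y => (⨆ x : Ω, (φ₁ x - c (x, y)))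
        + (⨆ x : Ω, (φ₂ x - c (x, y))) - (⨆ x : Ω, (ρ x - c (x, y)))) ν :=
      ((hTint φ₁).add (hTint φ₂)).sub (hTint ρ)
    have hadd : Integrable (fun y => (⨆ x : Ω, (φ₁ x - c (x, y)))
        + (⨆ x : Ω, (φ₂ x - c (x, y)))) ν := (hTint φ₁).add (hTint φ₂)
    have h := integral_mono (hTint χ) hint3 (hTχ ·)
    rw [integral_sub hadd (hTint ρ), integral_add (hTint φ₁) (hTint φ₂)] at h
    linarith
  -- integrals of continuous maps over Ω
  have hint : ∀ (ψ : C(Ω, ℝ)) (μ : Measure Ω), IsProbabilityMeasure μ →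
      Integrable (fun x => ψ x) μ := fun ψ μ hμ => mp_integrable μ ψ.continuous
  have hχint1 : ∫ x, χ x ∂μ₁ = ∫ x, φ₁ x ∂μ₁ - ∫ x, g x ∂μ₁ := by
    rw [show (fun x => χ x) = fun x => φ₁ x - g x from funext hχx]
    exact integral_sub (hint φ₁ μ₁ inferInstance) (hint g μ₁ inferInstance)
  have hρint2 : ∫ x, ρ x ∂μ₂ = ∫ x, φ₂ x ∂μ₂ + ∫ x, g x ∂μ₂ := by
    rw [show (fun x => ρ x) = fun x => φ₂ x + g x from funext hρx]
    exact integral_add (hint φ₂ μ₂ inferInstance) (hint g μ₂ inferInstance)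
  have hχint2 : ∫ x, χ x ∂μ₂ = ∫ x, φ₁ x ∂μ₂ - ∫ x, g x ∂μ₂ := by
    rw [show (fun x => χ x) = fun x => φ₁ x - g x from funext hχx]
    exact integral_sub (hint φ₁ μ₂ inferInstance) (hint g μ₂ inferInstance)
  -- minimality inequalities
  have hB : (∫ y, (⨆ x : Ω, (φ₂ x - c (x, y))) ∂ν) + ∫ x, g x ∂μ₂ ≤
      ∫ y, (⨆ x : Ω, (ρ x - c (x, y))) ∂ν := by
    have h := h₂ ρ
    rw [hJ μ₂ ρ, hJ μ₂ φ₂, hρint2] at h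
    linarith
  have hA : (∫ y, (⨆ x : Ω, (φ₁ x - c (x, y))) ∂ν) - ∫ x, g x ∂μ₁ ≤
      ∫ y, (⨆ x : Ω, (χ x - c (x, y))) ∂ν := by
    have h := h₁ χ
    rw [hJ μ₁ χ, hJ μ₁ φ₁, hχint1] at h
    linarith
  -- derive the contradiction via the uniqueness assumption
  have hfx₀ : f x₀ ≠ f xM := ne_of_lt hlt
  rcases huniq with hu | hu
  · -- χ is a minimizer for μ₁
    have hχmin : ∀ ψ : C(Ω, ℝ), J μ₁ χ ≤ J μ₁ ψ := by
      intro ψ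
      refine le_trans ?_ (h₁ ψ)
      rw [hJ μ₁ χ, hJ μ₁ φ₁, hχint1]
      have : ∫ y, (⨆ x : Ω, (χ x - c (x, y))) ∂ν ≤
          (∫ y, (⨆ x : Ω, (φ₁ x - c (x, y))) ∂ν) - ∫ x, g x ∂μ₁ := by
        have h3 : ∫ x, g x ∂μ₂ ≤
            (∫ y, (⨆ x : Ω, (ρ x - c (x, y))) ∂ν)
              - ∫ y, (⨆ x : Ω, (φ₂ x - c (x, y))) ∂ν := by linarith
        linarith [hIρ, hstar]
      linarith
    obtain ⟨C, hC⟩ := hu χ hχmin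
    have hCxM : χ xM = φ₁ xM + C := by rw [hC]; simp
    have hCx₀ : χ x₀ = φ₁ x₀ + C := by rw [hC]; simp
    have hχxM : χ xM = φ₂ xM + s := by
      simp only [hχ, ContinuousMap.inf_apply, ContinuousMap.add_apply,
        ContinuousMap.const_apply]
      refine inf_eq_right.mpr ?_
      linarith [hs2']
    have hCval : C = s - f xM := by
      have := hCxM
      rw [hχxM] at this
      simp only [hf] at *
      linarith
    -- evaluate at x₀
    have hχx₀ : χ x₀ = φ₁ x₀ + (s - f xM) := by rw [hCx₀, hCval]
    have hlt' : χ x₀ < φ₁ x₀ := by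
      rw [hχx₀]
      have : s - f xM < 0 := by linarith
      linarith
    have : χ x₀ = φ₂ x₀ + s := by
      simp only [hχ, ContinuousMap.inf_apply, ContinuousMap.add_apply,
        ContinuousMap.const_apply] at hlt' ⊢
      rcases le_total (φ₁ x₀) (φ₂ x₀ + s) with h | h
      · rw [inf_eq_left.mpr h] at hlt'
        exact absurd hlt' (lt_irrefl _)
      · exact inf_eq_right.mpr h
    rw [hχx₀] at this
    have : f x₀ = f xM := by simp only [hf] at *; linarith
    exact hfx₀ this
  · -- ρ is a minimizer for μ₂
    have hρmin : ∀ ψ : C(Ω, ℝ), J μ₂ ρ ≤ J μ₂ ψ := by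
      intro ψ
      refine le_trans ?_ (h₂ ψ)
      rw [hJ μ₂ ρ, hJ μ₂ φ₂, hρint2]
      have : ∫ y, (⨆ x : Ω, (ρ x - c (x, y))) ∂ν ≤
          (∫ y, (⨆ x : Ω, (φ₂ x - c (x, y))) ∂ν) + ∫ x, g x ∂μ₂ := by
        linarith [hIρ, hA, hstar]
      linarith
    obtain ⟨C, hC⟩ := hu ρ hρmin
    have hCxM : ρ xM = φ₂ xM + C := by rw [hC]; simp
    have hCx₀ : ρ x₀ = φ₂ x₀ + C := by rw [hC]; simp
    have hρxM : ρ xM = φ₁ xM - s := by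
      simp only [hρ, ContinuousMap.sup_apply, ContinuousMap.sub_apply,
        ContinuousMap.const_apply]
      refine sup_eq_right.mpr ?_
      linarith [hs2']
    have hCval : C = f xM - s := by
      have := hCxM
      rw [hρxM] at this
      simp only [hf] at *
      linarith
    have hρx₀ : ρ x₀ = φ₂ x₀ + (f xM - s) := by rw [hCx₀, hCval]
    have hlt' : φ₂ x₀ < ρ x₀ := by
      rw [hρx₀]
      have : 0 < f xM - s := by linarith
      linarith
    have : ρ x₀ = φ₁ x₀ - s := by
      simp only [hρ, ContinuousMap.sup_apply, ContinuousMap.sub_apply,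
        ContinuousMap.const_apply] at hlt' ⊢
      rcases le_total (φ₁ x₀ - s) (φ₂ x₀) with h | h
      · rw [sup_eq_left.mpr h] at hlt'
        exact absurd hlt' (lt_irrefl _)
      · exact sup_eq_right.mpr h
    rw [hρx₀] at this
    have : f x₀ = f xM := by simp only [hf] at *; linarith
    exact hfx₀ this
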